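/- Let C be a small category in which every morphism factors as a split epimorphism followed by a monomorphism and which satisfies the ascending chain condition. Then for every presheaf X on C, the category of elements C/X also has the property that every morphism factors as a split epimorphism followed by a monomorphism, and C/X satisfies the ascending chain condition. -/

import Mathlib

open CategoryTheory Opposite

universe w v u

namespace PaperEtendue

/-- An element `w` of a Heyting algebra is *widespread* if the lattice of elements
above `w` is complemented. -/
def Widespread {H : Type u} [HeytingAlgebra H] (w : H) : Prop :=
  ∀ v : H, w ≤ v → ∃ v' : H, w ≤ v' ∧ v ⊔ v' = ⊤ ∧ v ⊓ v' = w

/-- An object is *minimal* if every morphism with that domain is a monomorphism. -/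
def Minimal {C : Type u} [Category.{v} C] (c : C) : Prop :=
  ∀ ⦃d : C⦄ (f : c ⟶ d), Mono f

/-- An object is *preterminal* if there is at most one morphism into it from any object. -/
def Preterminal {C : Type u} [Category.{v} C] (c : C) : Prop :=
  ∀ ⦃b : C⦄ (u v : b ⟶ c), u = v

/-- The category of elements `C/X` of a presheaf `X`: objects are pairs `(x, D)`
with `x ∈ X(D)`. -/
structure Elem {C : Type u} [Category.{v} C] (X : Cᵒᵖ ⥤ Type w) : Type max u w where
  base : C
  elt : X.obj (op base)

/-- Morphisms `(x, D) → (y, E)` in `C/X` are morphisms `f : D → E` of `C` with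
`X(f)(y) = x`. -/
instance {C : Type u} [Category.{v} C] (X : Cᵒᵖ ⥤ Type w) : Category (Elem X) where
  Hom a b := {f : a.base ⟶ b.base // X.map f.op b.elt = a.elt}
  id a := ⟨𝟙 a.base, by simp⟩
  comp {a b c} f g := ⟨f.1 ≫ g.1, by
    rw [op_comp, FunctorToTypes.map_comp_apply, g.2, f.2]⟩
  id_comp f := Subtype.ext (Category.id_comp f.1)
  comp_id f := Subtype.ext (Category.comp_id f.1)
  assoc f g h := Subtype.ext (Category.assoc f.1 g.1 h.1)

/-- A presheaf is *strongly regular* if for every monomorphism of `C/X`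
with minimal codomain, the domain is also minimal. -/
def StronglyRegular {C : Type u} [Category.{v} C] (X : Cᵒᵖ ⥤ Type w) : Prop :=
  ∀ ⦃a b : Elem X⦄ (m : a ⟶ b), Mono m → Minimal b → Minimal a

/-- A presheaf is *non-singular* if every minimal object of `C/X` is preterminal. -/
def NonSingular {C : Type u} [Category.{v} C] (X : Cᵒᵖ ⥤ Type w) : Prop :=
  ∀ a : Elem X, Minimal a → Preterminal a

/-- Every morphism factors as a split epimorphism followed by a monomorphism. -/
def SplitEpiMonoFact (C : Type u) [Category.{v} C] : Prop :=
  ∀ ⦃a b : C⦄ (f : a ⟶ b), ∃ (c : C) (e : a ⟶ c) (m : c ⟶ b),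
    IsSplitEpi e ∧ Mono m ∧ e ≫ m = f

/-- Every morphism factors as a strong epimorphism followed by a monomorphism. -/
def StrongEpiMonoFact (C : Type u) [Category.{v} C] : Prop :=
  ∀ ⦃a b : C⦄ (f : a ⟶ b), ∃ (c : C) (e : a ⟶ c) (m : c ⟶ b),
    StrongEpi e ∧ Mono m ∧ e ≫ m = f

/-- The ascending chain condition: every `ℕ`-indexed chain of monomorphisms lying
over a fixed object via compatible monomorphisms contains an isomorphism. -/
def AscendingChainCondition (C : Type u) [Category.{v} C] : Prop :=
  ∀ (obj : ℕ → C) (c : C) (m : ∀ k : ℕ, obj k ⟶ obj (k + 1)) (i : ∀ k : ℕ, obj k ⟶ c),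
    (∀ k, Mono (m k)) → (∀ k, Mono (i k)) → (∀ k, m k ≫ i (k + 1) = i k) →
    ∃ t : ℕ, IsIso (m t)

/-- A category is *well-founded* if every `ℕ`-indexed chain of strong epimorphisms
is eventually constant. -/
def WellFoundedCat (C : Type u) [Category.{v} C] : Prop :=
  ∀ (obj : ℕ → C) (e : ∀ k : ℕ, obj k ⟶ obj (k + 1)),
    (∀ k, StrongEpi (e k)) → ∃ k : ℕ, ∀ m : ℕ, k ≤ m → IsIso (e m)

/-- `𝔥 c ≤ n`: in every sequence of `n+1` composable monomorphisms ending at `c`,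
at least one is an isomorphism. -/
def HeightLE {C : Type u} [Category.{v} C] (c : C) (n : ℕ) : Prop :=
  ∀ (obj : Fin (n + 2) → C) (f : ∀ i : Fin (n + 1), obj i.succ ⟶ obj i.castSucc),
    (∀ i, Mono (f i)) → obj 0 = c → ∃ i, IsIso (f i)

/-- Every sequence of `n+1` composable morphisms in `C` contains an isomorphism. -/
def ChainsContainIso (C : Type u) [Category.{v} C] (n : ℕ) : Prop :=
  ∀ (obj : Fin (n + 2) → C) (f : ∀ i : Fin (n + 1), obj i.succ ⟶ obj i.castSucc),
    ∃ i, IsIso (f i)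

/-- The full subcategory of `C/X` determined by the minimal objects. -/
abbrev MinimalElems {C : Type u} [Category.{v} C] (X : Cᵒᵖ ⥤ Type w) :=
  ObjectProperty.FullSubcategory (fun a : Elem X => Minimal a)

/-- A morphism factors through an object of height below `n`. -/
def FactorsThroughHeightLE {C : Type u} [Category.{v} C] {a b : C} (f : a ⟶ b) (n : ℕ) : Prop :=
  ∃ (c : C) (v : a ⟶ c) (u : c ⟶ b), HeightLE c n ∧ v ≫ u = f

/-- `dim X ≤ n`: every element of `X` is the restriction of an element along a morphism
factoring through an object of height below `n` (i.e. `X` is `n`-skeletal). -/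
def DimLE {C : Type u} [Category.{v} C] (X : Cᵒᵖ ⥤ Type w) (n : ℕ) : Prop :=
  ∀ (D : C) (x : X.obj (op D)), ∃ (E : C) (f : D ⟶ E) (y : X.obj (op E)),
    FactorsThroughHeightLE f n ∧ X.map f.op y = x

/-- A two-sided ideal of morphisms of a category. -/
def IsIdeal {C : Type u} [Category.{v} C] (I : MorphismProperty C) : Prop :=
  ∀ ⦃a b c d : C⦄ (h : a ⟶ b) (f : b ⟶ c) (g : c ⟶ d), I f → I (h ≫ f ≫ g)

/-- An idempotent ideal: every member factors as a composite of two members. -/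
def IsIdempotentIdeal {C : Type u} [Category.{v} C] (I : MorphismProperty C) : Prop :=
  IsIdeal I ∧ ∀ ⦃a b : C⦄ (f : a ⟶ b), I f →
    ∃ (c : C) (h : a ⟶ c) (g : c ⟶ b), I h ∧ I g ∧ h ≫ g = f

/-- The implication sieve `V ⇒ W`. -/
def sieveImp {C : Type u} [Category.{v} C] {D : C} (V W : Sieve D) : Sieve D where
  arrows F h := ∀ ⦃G : C⦄ (g : G ⟶ F), V.arrows (g ≫ h) → W.arrows (g ≫ h)
  downward_closed := by
    intro F F' h hh g G' g' hv
    have := hh (g' ≫ g) (by simpa using hv)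
    simpa using this

/-- `W` is a subpresheaf of `X` given as a family of subsets closed under the action. -/
def IsSubpresheaf {C : Type u} [Category.{v} C] (X : Cᵒᵖ ⥤ Type w)
    (W : ∀ D : Cᵒᵖ, Set (X.obj D)) : Prop :=
  ∀ ⦃D E : Cᵒᵖ⦄ (f : D ⟶ E) ⦃x : X.obj D⦄, x ∈ W D → X.map f x ∈ W E

/-- The implication subpresheaf `(V ⇒ W)(D)`. -/
def impSet {C : Type u} [Category.{v} C] (X : Cᵒᵖ ⥤ Type w)
    (V W : ∀ D : Cᵒᵖ, Set (X.obj D)) (D : Cᵒᵖ) : Set (X.obj D) :=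
  {x | ∀ ⦃E : Cᵒᵖ⦄ (f : D ⟶ E), X.map f x ∈ V E → X.map f x ∈ W E}

/-- `Ξ_k`: the image subpresheaf of the map `C(-, K) → X` corresponding to `k`. -/
def xiSet {C : Type u} [Category.{v} C] (X : Cᵒᵖ ⥤ Type w) {K : C} (k : X.obj (op K))
    (J : Cᵒᵖ) : Set (X.obj J) :=
  {j | ∃ g : op K ⟶ J, X.map g k = j}

lemma elem_hom_ext {C : Type u} [Category.{v} C] {X : Cᵒᵖ ⥤ Type w} {a b : Elem X}
    {f g : a ⟶ b} (h : f.1 = g.1) : f = g := Subtype.ext h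

lemma elem_comp_val {C : Type u} [Category.{v} C] {X : Cᵒᵖ ⥤ Type w} {a b c : Elem X}
    (f : a ⟶ b) (g : b ⟶ c) : (f ≫ g).1 = f.1 ≫ g.1 := rfl

lemma elem_id_val {C : Type u} [Category.{v} C] {X : Cᵒᵖ ⥤ Type w} (a : Elem X) :
    (𝟙 a : a ⟶ a).1 = 𝟙 a.base := rfl

lemma elem_mono_of_base {C : Type u} [Category.{v} C] {X : Cᵒᵖ ⥤ Type w} {a b : Elem X}
    (f : a ⟶ b) (hf : Mono f.1) : Mono f := by
  constructor
  intro d g h hgh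
  apply elem_hom_ext
  have : g.1 ≫ f.1 = h.1 ≫ f.1 := congrArg Subtype.val hgh
  exact hf.right_cancellation _ _ this

lemma elem_splitEpiMonoFact {C : Type u} [Category.{v} C]
    (hfact : SplitEpiMonoFact C) (X : Cᵒᵖ ⥤ Type w) :
    SplitEpiMonoFact (Elem X) := by
  intro a b f
  obtain ⟨c, e, m, he, hm, hcomp⟩ := hfact f.1
  have hy : X.map e.op (X.map m.op b.elt) = a.elt := by
    rw [← FunctorToTypes.map_comp_apply, ← op_comp, hcomp, f.2]
  refine ⟨⟨c, X.map m.op b.elt⟩, ⟨e, hy⟩, ⟨m, rfl⟩, ?_, ?_, ?_⟩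
  · refine ⟨⟨⟨⟨section_ e, ?_⟩, ?_⟩⟩⟩
    · show X.map (section_ e).op a.elt = X.map m.op b.elt
      rw [← hy, ← FunctorToTypes.map_comp_apply, ← op_comp, IsSplitEpi.id,
        op_id, FunctorToTypes.map_id_apply]
    · apply elem_hom_ext
      show section_ e ≫ e = 𝟙 _
      exact IsSplitEpi.id e
  · exact elem_mono_of_base _ hm
  · exact elem_hom_ext hcomp

lemma elem_mono_base {C : Type u} [Category.{v} C]
    (hfact : SplitEpiMonoFact C) {X : Cᵒᵖ ⥤ Type w} {a b : Elem X}
    (f : a ⟶ b) (hf : Mono f) : Mono f.1 := by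
  obtain ⟨cb, e, mb, he, hmb, hcomp⟩ := hfact f.1
  have hy : X.map e.op (X.map mb.op b.elt) = a.elt := by
    rw [← FunctorToTypes.map_comp_apply, ← op_comp, hcomp, f.2]
  set cc : Elem X := ⟨cb, X.map mb.op b.elt⟩
  set ee : a ⟶ cc := ⟨e, hy⟩ with hee
  set mm : cc ⟶ b := ⟨mb, rfl⟩ with hmm
  have hcomp' : ee ≫ mm = f := elem_hom_ext hcomp
  have hesplit : IsSplitEpi ee := by
    refine ⟨⟨⟨⟨section_ e, ?_⟩, ?_⟩⟩⟩
    · show X.map (section_ e).op a.elt = X.map mb.op b.elt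
      rw [← hy, ← FunctorToTypes.map_comp_apply, ← op_comp, IsSplitEpi.id,
        op_id, FunctorToTypes.map_id_apply]
    · apply elem_hom_ext
      show section_ e ≫ e = 𝟙 _
      exact IsSplitEpi.id e
  have hemono : Mono ee := by
    have : Mono (ee ≫ mm) := hcomp' ▸ hf
    exact mono_of_mono ee mm
  have : IsIso ee := isIso_of_mono_of_isSplitEpi ee
  have heiso : IsIso e := by
    refine ⟨(inv ee).1, ?_, ?_⟩
    · exact congrArg Subtype.val (IsIso.hom_inv_id ee)
    · exact congrArg Subtype.val (IsIso.inv_hom_id ee)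
  rw [← hcomp]
  exact mono_comp e mb

theorem elem_splitEpiMonoFact_and_acc {C : Type u} [Category.{v} C]
    (hfact : SplitEpiMonoFact C) (hacc : AscendingChainCondition C) (X : Cᵒᵖ ⥤ Type w) :
    SplitEpiMonoFact (Elem X) ∧ AscendingChainCondition (Elem X) := by
  refine ⟨elem_splitEpiMonoFact hfact X, ?_⟩
  intro obj c m i hm hi hcomm
  obtain ⟨t, ht⟩ := hacc (fun k => (obj k).base) c.base (fun k => (m k).1)
    (fun k => (i k).1) (fun k => elem_mono_base hfact _ (hm k))
    (fun k => elem_mono_base hfact _ (hi k))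
    (fun k => congrArg Subtype.val (hcomm k))
  refine ⟨t, ?_⟩
  have hcond : X.map (inv (m t).1).op (obj t).elt = (obj (t + 1)).elt := by
    have h1 := congrArg (X.map (inv (m t).1).op) (m t).2
    rw [← FunctorToTypes.map_comp_apply, ← op_comp, IsIso.inv_hom_id,
      op_id, FunctorToTypes.map_id_apply] at h1
    exact h1.symm
  refine ⟨⟨inv (m t).1, hcond⟩, ?_, ?_⟩
  · exact elem_hom_ext (IsIso.hom_inv_id (m t).1)
  · exact elem_hom_ext (IsIso.inv_hom_id (m t).1)

end PaperEtendue
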